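/- Let Γ ⊆ SL(2,ℤ) be a subgroup of finite index and let U = [[0,1],[1,0]]. Define W₀(Γ) = {(x,y) ∈ ℚ² : x is in the (UΓU)-orbit of ∞ under Möbius action, and y·Denom(x) ∈ ℤ}, where Denom(x) is the minimal positive denominator of x. Then W₀(Γ) is dense in ℝ². -/

import Mathlib

open OnePoint

/-- The Möbius action of an integral 2×2 matrix `g = [[a,b],[c,d]]` on the extended
real line `P¹(ℝ) = ℝ ∪ {∞}`. -/
noncomputable def moebius (g : Matrix (Fin 2) (Fin 2) ℤ) (p : OnePoint ℝ) : OnePoint ℝ :=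
  Option.elim (p : Option ℝ)
    (if (g 1 0 : ℝ) = 0 then (∞ : OnePoint ℝ) else ((g 0 0 : ℝ) / (g 1 0 : ℝ) : ℝ))
    (fun x => if (g 1 0 : ℝ) * x + (g 1 1 : ℝ) = 0 then (∞ : OnePoint ℝ)
      else ((((g 0 0 : ℝ) * x + (g 0 1 : ℝ)) / ((g 1 0 : ℝ) * x + (g 1 1 : ℝ)) : ℝ) : OnePoint ℝ))

/-- The matrix `U = [[0,1],[1,0]]`. -/
def Umat : Matrix (Fin 2) (Fin 2) ℤ := !![0, 1; 1, 0]

lemma pow_parab (p q : ℤ) (n : ℕ) :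
    (!![1+p*q, -q^2; p^2, 1-p*q] : Matrix (Fin 2) (Fin 2) ℤ) ^ n
      = !![1+n*(p*q), -(n*q^2); n*p^2, 1-n*(p*q)] := by
  induction n with
  | zero => simp [Matrix.one_fin_two]
  | succ n ih =>
    rw [pow_succ, ih, Matrix.mul_fin_two]
    ext i j
    fin_cases i <;> fin_cases j <;> simp <;> ring

/-- For a finite-index subgroup `Γ ⊆ SL(2,ℤ)`, the set
`W₀(Γ) = {(x,y) ∈ ℚ² : x ∈ (UΓU)-orbit(∞), y·Denom(x) ∈ ℤ}` is dense in `ℝ²`,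
where `Denom(x)` is the minimal positive denominator of `x`. -/
theorem W0_dense (Γ : Subgroup (Matrix.SpecialLinearGroup (Fin 2) ℤ))
    (hΓ : Γ.FiniteIndex) :
    Dense {p : ℝ × ℝ | ∃ x y : ℚ,
      (∃ γ ∈ Γ, moebius (Umat * (γ : Matrix.SpecialLinearGroup (Fin 2) ℤ).val * Umat) ∞
          = (((x : ℝ) : OnePoint ℝ))) ∧
      (∃ z : ℤ, y * (x.den : ℚ) = (z : ℚ)) ∧
      p = ((x : ℝ), (y : ℝ))} := by
  haveI := hΓ
  haveI : Γ.normalCore.FiniteIndex := Subgroup.finiteIndex_normalCore Γ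
  obtain ⟨N, hNdef⟩ : ∃ n : ℕ, n = Γ.normalCore.index := ⟨_, rfl⟩
  have hNnz : N ≠ 0 := by rw [hNdef]; exact Subgroup.FiniteIndex.index_ne_zero
  have hN1 : 1 ≤ (N : ℝ) := by exact_mod_cast Nat.one_le_iff_ne_zero.mpr hNnz
  rw [Metric.dense_iff]
  rintro ⟨a, b⟩ r hr
  obtain ⟨q, hq⟩ := exists_nat_gt (max 1 (2 / r))
  have hq1 : 1 ≤ (q : ℝ) := le_of_lt (lt_of_le_of_lt (le_max_left _ _) hq)
  have hq0 : (0:ℝ) < q := lt_of_lt_of_le one_pos hq1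
  have hrq : 2 < r * q := by
    have h2r : 2 / r < q := lt_of_le_of_lt (le_max_right _ _) hq
    calc 2 = (2 / r) * r := by field_simp
    _ < q * r := mul_lt_mul_of_pos_right h2r hr
    _ = r * q := mul_comm _ _
  obtain ⟨p, hpa, hpa'⟩ : ∃ p : ℤ, (p:ℝ) ≤ q * a ∧ (q:ℝ) * a < p + 1 :=
    ⟨⌊(q:ℝ) * a⌋, Int.floor_le _, Int.lt_floor_add_one _⟩
  obtain ⟨A, hA⟩ : ∃ A : ℤ, A = (N : ℤ) * p * q - 1 := ⟨_, rfl⟩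
  obtain ⟨B, hB⟩ : ∃ B : ℤ, B = (N : ℤ) * (q : ℤ)^2 := ⟨_, rfl⟩
  have hBpos : 0 < B := by
    rw [hB]
    have : 0 < (N : ℤ) := by exact_mod_cast Nat.pos_of_ne_zero hNnz
    have : 0 < (q : ℤ) := by exact_mod_cast hq0
    positivity
  have hBR : (0:ℝ) < (B : ℝ) := by exact_mod_cast hBpos
  have hBRe : (B : ℝ) = (N:ℝ) * (q:ℝ)^2 := by rw [hB]; push_cast; ring
  have hARe : (A : ℝ) = (N:ℝ) * (p:ℝ) * (q:ℝ) - 1 := by rw [hA]; push_cast; ring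
  obtain ⟨x, hx⟩ : ∃ x : ℚ, x = (A : ℚ) / (B : ℚ) := ⟨_, rfl⟩
  have hcop : IsCoprime A B := ⟨-((N:ℤ)*p*q + 1), (N:ℤ)*p^2, by rw [hA, hB]; ring⟩
  have hden : ((x.den : ℤ)) = B := by
    rw [hx]; exact Rat.den_div_eq_of_coprime hBpos (Int.isCoprime_iff_gcd_eq_one.mp hcop)
  obtain ⟨k, hk1, hk2⟩ : ∃ k : ℤ, (k:ℝ) ≤ b * B ∧ b * (B:ℝ) < k + 1 :=
    ⟨⌊b * (B:ℝ)⌋, Int.floor_le _, Int.lt_floor_add_one _⟩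
  obtain ⟨y, hy⟩ : ∃ y : ℚ, y = (k : ℚ) / (B : ℚ) := ⟨_, rfl⟩
  have hxr : (x : ℝ) = (A : ℝ) / (B : ℝ) := by rw [hx]; push_cast; ring
  have hyr : (y : ℝ) = (k : ℝ) / (B : ℝ) := by rw [hy]; push_cast; ring
  have hrB : 1 < r * (B:ℝ) := by nlinarith [mul_pos hq0 hq0, mul_pos hr hq0]
  have hXB : (x:ℝ) * (B:ℝ) = (A:ℝ) := by rw [hxr]; exact div_mul_cancel₀ _ (ne_of_gt hBR)
  have hYB : (y:ℝ) * (B:ℝ) = (k:ℝ) := by rw [hyr]; exact div_mul_cancel₀ _ (ne_of_gt hBR)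
  have hNq : (0:ℝ) < (N:ℝ) * q := by positivity
  have hNq1 : (1:ℝ) ≤ (N:ℝ) * q := by nlinarith
  have haB : a * (B:ℝ) = a * ((N:ℝ)*(q:ℝ)^2) := by rw [hBRe]
  have hrB2 : r * (B:ℝ) = r * ((N:ℝ)*(q:ℝ)^2) := by rw [hBRe]
  have hf1 : (N:ℝ)*q*p ≤ (N:ℝ)*q*((q:ℝ)*a) := mul_le_mul_of_nonneg_left hpa (le_of_lt hNq)
  have hf2 : (N:ℝ)*q*((q:ℝ)*a) < (N:ℝ)*q*((p:ℝ)+1) := mul_lt_mul_of_pos_left hpa' hNq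
  have hf3 : 2 * ((N:ℝ)*q) < r * (q:ℝ) * ((N:ℝ)*q) := mul_lt_mul_of_pos_right hrq hNq
  have hf4 : (0:ℝ) < r * ((N:ℝ)*(q:ℝ)^2) := by positivity
  have hx1 : (x:ℝ) - a < r := by
    refine (mul_lt_mul_iff_of_pos_right hBR).mp ?_
    have expand : ((x:ℝ) - a) * (B:ℝ) = (x:ℝ)*(B:ℝ) - a*(B:ℝ) := by ring
    rw [expand, hXB, hARe, haB, hrB2]
    linarith [hf1, hf4]
  have hx2 : a - (x:ℝ) < r := by
    refine (mul_lt_mul_iff_of_pos_right hBR).mp ?_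
    have expand : (a - (x:ℝ)) * (B:ℝ) = a*(B:ℝ) - (x:ℝ)*(B:ℝ) := by ring
    rw [expand, hXB, hARe, haB, hrB2]
    linarith [hf2, hf3, hNq1]
  have hy1 : (y:ℝ) - b < r := by
    refine (mul_lt_mul_iff_of_pos_right hBR).mp ?_
    have expand : ((y:ℝ) - b) * (B:ℝ) = (y:ℝ)*(B:ℝ) - b*(B:ℝ) := by ring
    rw [expand, hYB]
    linarith [hk1, hrB]
  have hy2 : b - (y:ℝ) < r := by
    refine (mul_lt_mul_iff_of_pos_right hBR).mp ?_
    have expand : (b - (y:ℝ)) * (B:ℝ) = b*(B:ℝ) - (y:ℝ)*(B:ℝ) := by ring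
    rw [expand, hYB]
    linarith [hk2, hrB]
  refine ⟨((x:ℝ), (y:ℝ)), ?_, x, y, ?_, ?_, rfl⟩
  · rw [Metric.mem_ball, Prod.dist_eq, max_lt_iff]
    dsimp only
    constructor
    · rw [Real.dist_eq, abs_sub_lt_iff]; exact ⟨hx1, hx2⟩
    · rw [Real.dist_eq, abs_sub_lt_iff]; exact ⟨hy1, hy2⟩
  · -- group element
    have hdet : (!![1+p*q, -q^2; p^2, 1-p*q] : Matrix (Fin 2) (Fin 2) ℤ).det = 1 := by
      simp [Matrix.det_fin_two_of]; ring
    obtain ⟨g1, hg1⟩ : ∃ g : Matrix.SpecialLinearGroup (Fin 2) ℤ,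
        (g : Matrix (Fin 2) (Fin 2) ℤ) = !![1+p*q, -q^2; p^2, 1-p*q] := ⟨⟨_, hdet⟩, rfl⟩
    refine ⟨g1 ^ N, ?_, ?_⟩
    · rw [hNdef]; exact Subgroup.normalCore_le Γ (Subgroup.pow_index_mem Γ.normalCore _)
    have hval : ((g1 ^ N : Matrix.SpecialLinearGroup (Fin 2) ℤ) : Matrix (Fin 2) (Fin 2) ℤ)
        = !![1+(N:ℤ)*(p*q), -((N:ℤ)*q^2); (N:ℤ)*p^2, 1-(N:ℤ)*(p*q)] := by
      rw [Matrix.SpecialLinearGroup.coe_pow, hg1]; exact pow_parab p q N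
    rw [hval]
    rw [show Umat * !![1+(N:ℤ)*(p*q), -((N:ℤ)*q^2); (N:ℤ)*p^2, 1-(N:ℤ)*(p*q)] * Umat
        = !![1-(N:ℤ)*(p*q), (N:ℤ)*p^2; -((N:ℤ)*q^2), 1+(N:ℤ)*(p*q)] from by
      simp [Umat, Matrix.mul_fin_two]]
    have hNq2 : (0:ℝ) < (N:ℝ)*(q:ℝ)^2 := mul_pos (lt_of_lt_of_le one_pos hN1) (pow_pos hq0 2)
    have hent : (!![1-(N:ℤ)*(p*q), (N:ℤ)*p^2; -((N:ℤ)*q^2), 1+(N:ℤ)*(p*q)] :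
        Matrix (Fin 2) (Fin 2) ℤ) 1 0 = -((N:ℤ)*q^2) := by simp
    have hc : (((!![1-(N:ℤ)*(p*q), (N:ℤ)*p^2; -((N:ℤ)*q^2), 1+(N:ℤ)*(p*q)] :
        Matrix (Fin 2) (Fin 2) ℤ) 1 0 : ℤ) : ℝ) ≠ 0 := by
      rw [hent]; push_cast; exact neg_ne_zero.mpr (ne_of_gt hNq2)
    simp only [moebius, Option.elim]
    rw [if_neg hc]
    congr 1
    norm_num
    rw [hxr, hARe, hBRe]
    have hd : ((N:ℝ)*(q:ℝ)^2) ≠ 0 := ne_of_gt hNq2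
    push_cast
    rw [div_eq_div_iff (neg_ne_zero.mpr hd) hd]
    ring
  · refine ⟨k, ?_⟩
    have hdq : (x.den : ℚ) = (B : ℚ) := by exact_mod_cast hden
    rw [hdq, hy, div_mul_cancel₀]
    exact_mod_cast ne_of_gt hBpos
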